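/- Let L be a waterfall list on indices 0,...,n with |L(0)| = b, |L(i)| = 2b+e for 1 ≤ i ≤ n−2, |L(n−1)| = b+e, |L(n)| = 2e, where n = Even(2b/e) is even. Then for every j ∈ {0,...,n}: |⋃_{k=0}^{j} L(k)| ≥ (j+1)b if j ≤ n−2, |⋃_{k=0}^{n−1} L(k)| ≥ nb, and |⋃_{k=0}^{n} L(k)| ≥ nb + e. -/

import Mathlib

def Waterfall (n : ℕ) (L : ℕ → Finset ℕ) : Prop :=
  ∀ i ≤ n, ∀ j ≤ n, i + 2 ≤ j → Disjoint (L i) (L j)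

/-- The smallest even integer `≥ 2b/e` (for `e ≥ 1`), namely `2⌈b/e⌉`. -/
def evenCeil (b e : ℕ) : ℕ := 2 * ((b + e - 1) / e)

lemma waterfall_key (n j : ℕ) (L : ℕ → Finset ℕ) (hw : Waterfall n L) (r m : ℕ)
    (hm : ∀ k < m, 2 * k + r ≤ j) (hj : j ≤ n) :
    ∑ k ∈ Finset.range m, (L (2 * k + r)).card ≤ ((Finset.Icc 0 j).biUnion L).card := by
  classical
  set S := (Finset.range m).image (fun k => 2 * k + r) with hS
  have hmemS : ∀ x ∈ S, x ≤ n := by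
    intro x hx
    simp only [hS, Finset.mem_image, Finset.mem_range] at hx
    obtain ⟨a, ha, rfl⟩ := hx
    exact le_trans (hm a ha) hj
  have hdisj : ∀ x ∈ S, ∀ y ∈ S, x ≠ y → Disjoint (L x) (L y) := by
    intro x hx y hy hxy
    have hxn := hmemS x hx
    have hyn := hmemS y hy
    simp only [hS, Finset.mem_image, Finset.mem_range] at hx hy
    obtain ⟨a, _, rfl⟩ := hx
    obtain ⟨c, _, rfl⟩ := hy
    rcases lt_or_gt_of_ne (fun h : a = c => hxy (by rw [h])) with h | h
    · exact hw _ hxn _ hyn (by omega)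
    · exact (hw _ hyn _ hxn (by omega)).symm
  have h1 : (S.biUnion L).card = ∑ x ∈ S, (L x).card := Finset.card_biUnion hdisj
  have h2 : ∑ x ∈ S, (L x).card = ∑ k ∈ Finset.range m, (L (2 * k + r)).card := by
    rw [hS]
    exact Finset.sum_image (by intro a _ c _ h; have h' : 2 * a + r = 2 * c + r := h; omega)
  have hsub : S.biUnion L ⊆ (Finset.Icc 0 j).biUnion L := by
    apply Finset.biUnion_subset_biUnion_of_subset_left
    intro x hx
    simp only [hS, Finset.mem_image, Finset.mem_range] at hx
    obtain ⟨a, ha, rfl⟩ := hx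
    simp only [Finset.mem_Icc]
    exact ⟨Nat.zero_le _, hm a ha⟩
  calc ∑ k ∈ Finset.range m, (L (2 * k + r)).card = (S.biUnion L).card := by rw [h1, h2]
    _ ≤ ((Finset.Icc 0 j).biUnion L).card := Finset.card_le_card hsub

theorem amplitude_bounds_for_modified_list (n b e : ℕ) (hb : 0 < b) (he : 0 < e)
    (hn : n = evenCeil b e) (L : ℕ → Finset ℕ) (hw : Waterfall n L)
    (h0 : (L 0).card = b)
    (hmid : ∀ i, 1 ≤ i → i ≤ n - 2 → (L i).card = 2 * b + e)
    (hn1 : (L (n - 1)).card = b + e) (hlast : (L n).card = 2 * e) :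
    (∀ j ≤ n - 2, ((Finset.Icc 0 j).biUnion L).card ≥ (j + 1) * b) ∧
    ((Finset.Icc 0 (n - 1)).biUnion L).card ≥ n * b ∧
    ((Finset.Icc 0 n).biUnion L).card ≥ n * b + e := by
  set s := (b + e - 1) / e with hsdef
  have hns : n = 2 * s := hn
  have hs1 : 1 ≤ s := by
    rw [hsdef, Nat.le_div_iff_mul_le he]
    omega
  have hse : b ≤ s * e := by
    have hd := Nat.div_add_mod (b + e - 1) e
    have hm := Nat.mod_lt (b + e - 1) he
    have : e * s + (b + e - 1) % e = b + e - 1 := hd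
    have hbe : b + e - 1 + 1 = b + e := by omega
    have h1 : e * s + (b + e - 1) % e + 1 = b + e := by omega
    have h2 : (b + e - 1) % e + 1 ≤ e := hm
    have h3 : e * s = s * e := Nat.mul_comm e s
    linarith
  obtain ⟨u, hu⟩ : ∃ u, s = u + 1 := ⟨s - 1, by omega⟩
  refine ⟨?_, ?_, ?_⟩
  · -- first goal
    intro j hj
    rcases Nat.even_or_odd j with ⟨t, ht⟩ | ⟨t, ht⟩
    · -- j = 2t
      have hkey := waterfall_key n j L hw 0 (t + 1) (by omega) (by omega)
      have hsum : ∑ k ∈ Finset.range (t + 1), (L (2 * k + 0)).card = t * (2 * b + e) + b := by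
        rw [Finset.sum_range_succ']
        have : ∀ k ∈ Finset.range t, (L (2 * (k + 1) + 0)).card = 2 * b + e := by
          intro k hk
          simp only [Finset.mem_range] at hk
          exact hmid _ (by omega) (by omega)
        rw [Finset.sum_congr rfl this, Finset.sum_const, smul_eq_mul]
        simp [h0]
      rw [hsum] at hkey
      have : (j + 1) * b ≤ t * (2 * b + e) + b := by nlinarith
      omega
    · -- j = 2t + 1
      have hkey := waterfall_key n j L hw 1 (t + 1) (by omega) (by omega)
      have hsum : ∑ k ∈ Finset.range (t + 1), (L (2 * k + 1)).card = (t + 1) * (2 * b + e) := by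
        have : ∀ k ∈ Finset.range (t + 1), (L (2 * k + 1)).card = 2 * b + e := by
          intro k hk
          simp only [Finset.mem_range] at hk
          exact hmid _ (by omega) (by omega)
        rw [Finset.sum_congr rfl this, Finset.sum_const, smul_eq_mul, Finset.card_range]
      rw [hsum] at hkey
      have : (j + 1) * b ≤ (t + 1) * (2 * b + e) := by nlinarith
      omega
  · -- second goal: j = n - 1
    have hkey := waterfall_key n (n - 1) L hw 1 s (by omega) (by omega)
    have hsum : ∑ k ∈ Finset.range s, (L (2 * k + 1)).card = u * (2 * b + e) + (b + e) := by
      rw [hu, Finset.sum_range_succ]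
      have hlastterm : (L (2 * u + 1)).card = b + e := by
        have : 2 * u + 1 = n - 1 := by omega
        rw [this, hn1]
      have : ∀ k ∈ Finset.range u, (L (2 * k + 1)).card = 2 * b + e := by
        intro k hk
        simp only [Finset.mem_range] at hk
        exact hmid _ (by omega) (by omega)
      rw [Finset.sum_congr rfl this, Finset.sum_const, smul_eq_mul, Finset.card_range, hlastterm]
    rw [hsum] at hkey
    have hb2 : b ≤ u * e + e := by
      have : b ≤ (u + 1) * e := by rw [← hu]; exact hse
      nlinarith
    have hA : u * (2 * b + e) + (b + e) = 2 * u * b + b + (u * e + e) := by ring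
    have hB : n * b = 2 * u * b + 2 * b := by rw [hns, hu]; ring
    have : n * b ≤ u * (2 * b + e) + (b + e) := by rw [hA, hB]; linarith
    omega
  · -- third goal: j = n
    have hkey := waterfall_key n n L hw 0 (s + 1) (by omega) (le_refl n)
    have hsum : ∑ k ∈ Finset.range (s + 1), (L (2 * k + 0)).card
        = u * (2 * b + e) + b + 2 * e := by
      rw [Finset.sum_range_succ]
      have hlastterm : (L (2 * s + 0)).card = 2 * e := by
        have : 2 * s + 0 = n := by omega
        rw [this, hlast]
      rw [hlastterm, hu, Finset.sum_range_succ']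
      have : ∀ k ∈ Finset.range u, (L (2 * (k + 1) + 0)).card = 2 * b + e := by
        intro k hk
        simp only [Finset.mem_range] at hk
        exact hmid _ (by omega) (by omega)
      rw [Finset.sum_congr rfl this, Finset.sum_const, smul_eq_mul, Finset.card_range]
      simp [h0]
    rw [hsum] at hkey
    have hb2 : b ≤ u * e + e := by
      have : b ≤ (u + 1) * e := by rw [← hu]; exact hse
      nlinarith
    have hA : u * (2 * b + e) + b + 2 * e = 2 * u * b + b + (u * e + e) + e := by ring
    have hB : n * b + e = 2 * u * b + 2 * b + e := by rw [hns, hu]; ring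
    have : n * b + e ≤ u * (2 * b + e) + b + 2 * e := by rw [hA, hB]; linarith
    omega
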